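/- Let q > 0 and let P be a q-stable finite multiset of vectors admitting a proper decomposition into components P₁ and P₂ (both spans nonzero, spans linearly independent). Then the number of nonzero vectors of P (with multiplicity) is at least dim(span P) + 2q, in particular strictly greater than dim(span P) + q. -/
import Mathlib


open scoped Classical

/-- The linear span of (the set of elements of) a multiset of vectors. -/
def mSpan (F : Type*) {V : Type*} [Field F] [AddCommGroup V] [Module F V]
    (P : Multiset V) : Submodule F V :=
  Submodule.span F {x | x ∈ P}

/-- A finite multiset `P` of vectors is `q`-stable if its linear span is unchanged after
removing any at most `q` vectors (counted with multiplicity). -/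
def QStable (F : Type*) {V : Type*} [Field F] [AddCommGroup V] [Module F V]
    (q : ℕ) (P : Multiset V) : Prop :=
  ∀ S : Multiset V, S ≤ P → Multiset.card S ≤ q → mSpan F (P - S) = mSpan F P

/-- The number of nonzero vectors of a multiset, with multiplicity. -/
noncomputable def nnz {V : Type*} [Zero V] (P : Multiset V) : ℕ :=
  Multiset.card (Multiset.filter (fun v => v ≠ 0) P)

section Aux

variable {F V : Type*} [Field F] [AddCommGroup V] [Module F V]


lemma exists_sub_card {α : Type*} (T : Multiset α) (n : ℕ) (h : n ≤ Multiset.card T) :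
    ∃ S, S ≤ T ∧ Multiset.card S = n := by
  refine ⟨(T.toList.take n : List α), ?_, ?_⟩
  · have h1 : (↑(T.toList.take n) : Multiset α) ≤ ↑T.toList :=
      (List.take_sublist n T.toList).subperm
    simpa using h1
  · simp only [Multiset.coe_card, List.length_take]
    have : T.toList.length = Multiset.card T := Multiset.length_toList T
    omega

lemma mSpan_add (A B : Multiset V) : mSpan F (A + B) = mSpan F A ⊔ mSpan F B := by
  rw [mSpan, mSpan, mSpan, ← Submodule.span_union]
  congr 1
  ext x
  simp [Multiset.mem_add]

lemma mSpan_le_of_le {A B : Multiset V} (h : A ≤ B) : mSpan F A ≤ mSpan F B :=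
  Submodule.span_mono (fun x hx => Multiset.mem_of_le h hx)

lemma mSpan_filter_ne (T : Multiset V) :
    mSpan F (Multiset.filter (fun v => v ≠ 0) T) = mSpan F T := by
  refine le_antisymm (mSpan_le_of_le (Multiset.filter_le _ _)) ?_
  rw [mSpan, Submodule.span_le]
  intro x hx
  by_cases hx0 : x = 0
  · simp [hx0]
  · exact Submodule.subset_span (by simpa [Multiset.mem_filter] using ⟨hx, hx0⟩)

lemma finrank_mSpan_le [FiniteDimensional F V] (T : Multiset V) :
    Module.finrank F (mSpan F T) ≤ Multiset.card T := by
  have h1 : mSpan F T = Submodule.span F (T.toFinset : Set V) := by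
    rw [mSpan]; congr 1; ext x; simp
  rw [h1]
  exact (finrank_span_finset_le_card (R := F) T.toFinset).trans T.toFinset_card_le

/-- Per-component bound. -/
lemma component_bound [FiniteDimensional F V] (q : ℕ) (Q : Multiset V)
    (hQ : ∀ S : Multiset V, S ≤ Q → Multiset.card S ≤ q → mSpan F (Q - S) = mSpan F Q)
    (hne : mSpan F Q ≠ ⊥) :
    Module.finrank F (mSpan F Q) + q ≤ Multiset.card (Multiset.filter (fun v => v ≠ 0) Q) := by
  set N := Multiset.filter (fun v => (v : V) ≠ 0) Q with hN
  -- Step 1: q ≤ card N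
  have hqN : q ≤ Multiset.card N := by
    by_contra hlt
    push_neg at hlt
    have hle : N ≤ Q := Multiset.filter_le _ _
    have := hQ N hle hlt.le
    have hz : mSpan F (Q - N) = ⊥ := by
      rw [mSpan, Submodule.span_eq_bot.2]
      intro x hx
      have hx' : x ∈ Q - N := hx
      have : x ∈ Q ∧ ¬ (x ≠ 0) := by
        by_contra hc
        push_neg at hc
        have hxQ : x ∈ Q := Multiset.mem_of_le (tsub_le_self) hx'
        have hxne : x ≠ 0 := hc hxQ
        have hxN : x ∈ N := by simp [hN, Multiset.mem_filter, hxQ, hxne]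
        have hcount : Multiset.count x (Q - N) = 0 := by
          rw [Multiset.count_sub]
          have : Multiset.count x N = Multiset.count x Q := by
            rw [hN, Multiset.count_filter, if_pos hxne]
          omega
        exact absurd (Multiset.count_pos.2 hx') (by omega)
      simpa using this.2
    exact hne (hz ▸ this.symm) |>.elim
  -- Step 2: pick S of card q inside N
  obtain ⟨S, hSN, hScard⟩ := exists_sub_card N q hqN
  have hSQ : S ≤ Q := hSN.trans (Multiset.filter_le _ _)
  have hspan := hQ S hSQ hScard.le
  have hrank : Module.finrank F (mSpan F Q) ≤ Multiset.card N - q := by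
    calc Module.finrank F (mSpan F Q) = Module.finrank F (mSpan F (Q - S)) := by rw [hspan]
    _ = Module.finrank F (mSpan F (Multiset.filter (fun v => v ≠ 0) (Q - S))) := by
        rw [mSpan_filter_ne]
    _ ≤ Multiset.card (Multiset.filter (fun v => (v : V) ≠ 0) (Q - S)) := finrank_mSpan_le _
    _ = Multiset.card N - q := by
        rw [Multiset.filter_sub, ← hN]
        have hfS : Multiset.filter (fun v => (v : V) ≠ 0) S = S := by
          rw [Multiset.filter_eq_self]
          intro x hx
          have : x ∈ N := Multiset.mem_of_le hSN hx
          rw [hN, Multiset.mem_filter] at this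
          exact this.2
        rw [hfS, Multiset.card_sub hSN, hScard]
  omega

end Aux

/-- If `q > 0` and a `q`-stable multiset `P` admits a proper decomposition into two
components (both spans nonzero and linearly independent), then the number of nonzero
vectors of `P` is at least `dim (span P) + 2q`, in particular strictly greater than
`dim (span P) + q`. -/
theorem stmt_4 {F V : Type*} [Field F] [AddCommGroup V] [Module F V] [FiniteDimensional F V]
    (q : ℕ) (hq : 0 < q) (P P₁ P₂ : Multiset V) (hP : QStable F q P) (hsum : P = P₁ + P₂)
    (h₁ : mSpan F P₁ ≠ ⊥) (h₂ : mSpan F P₂ ≠ ⊥)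
    (hdisj : Disjoint (mSpan F P₁) (mSpan F P₂)) :
    Module.finrank F (mSpan F P) + 2 * q ≤ nnz P ∧
      Module.finrank F (mSpan F P) + q < nnz P := by
  have key : ∀ Q R : Multiset V, P = Q + R → Disjoint (mSpan F Q) (mSpan F R) →
      ∀ S : Multiset V, S ≤ Q → Multiset.card S ≤ q → mSpan F (Q - S) = mSpan F Q := by
    intro Q R hQR hd S hS hc
    have hPS : P - S = R + (Q - S) := by
      rw [hQR, add_comm Q R, add_tsub_assoc_of_le hS]
    have hSP : S ≤ P := hQR ▸ hS.trans (Multiset.le_add_right _ _)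
    have h0 := hP S hSP hc
    rw [hPS, mSpan_add, hQR, mSpan_add] at h0
    refine eq_of_le_of_inf_le_of_sup_le (z := mSpan F R) (mSpan_le_of_le tsub_le_self) ?_ ?_
    · rw [disjoint_iff.mp hd]; exact bot_le
    · rw [sup_comm (mSpan F (Q - S))]; exact h0.ge
  have hQ1 := key P₁ P₂ hsum hdisj
  have hQ2 := key P₂ P₁ (by rw [hsum, add_comm]) hdisj.symm
  have hb1 := component_bound q P₁ hQ1 h₁
  have hb2 := component_bound q P₂ hQ2 h₂
  have hnnz : nnz P = nnz P₁ + nnz P₂ := by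
    simp only [nnz]
    rw [hsum, Multiset.filter_add, Multiset.card_add]
  have hr : Module.finrank F (mSpan F P) ≤
      Module.finrank F (mSpan F P₁) + Module.finrank F (mSpan F P₂) := by
    have h := Submodule.finrank_sup_add_finrank_inf_eq (mSpan F P₁) (mSpan F P₂)
    rw [hsum, mSpan_add]
    omega
  simp only [nnz] at hnnz ⊢
  rw [hnnz]
  omega
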